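/- Let X be an arbitrary d×d complex matrix and let γ' = (1/2) * [[√(XX†), X], [X†, √(X†X)]] be the 2d×2d block matrix. Then for any vector ψ in ℂ^d (with √(XX†) invertible), the vector (ψ, -X†(√(XX†))⁻¹ψ) lies in the kernel of γ'. Consequently the rank of γ' is at most d. -/

import Mathlib

open Matrix
open scoped ComplexOrder

/-- The positive semidefinite square root of a positive semidefinite matrix
(the definition `Matrix.PosSemidef.sqrt` of the older Mathlib, removed since). -/
noncomputable def Matrix.PosSemidef.sqrt {n 𝕜 : Type*} [Fintype n] [RCLike 𝕜] [DecidableEq n]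
    {A : Matrix n n 𝕜} (hA : A.PosSemidef) : Matrix n n 𝕜 :=
  hA.1.eigenvectorUnitary.1 * diagonal ((↑) ∘ (√·) ∘ hA.1.eigenvalues) *
  (star hA.1.eigenvectorUnitary : Matrix n n 𝕜)

open scoped MatrixOrder in
theorem Matrix.PosSemidef.sqrt_eq_cfcSqrt {n 𝕜 : Type*} [Fintype n] [RCLike 𝕜] [DecidableEq n]
    {A : Matrix n n 𝕜} (hA : A.PosSemidef) : hA.sqrt = CFC.sqrt A := by
  rw [CFC.sqrt_eq_cfc, cfc_nnreal_eq_real _ A, hA.1.cfc_eq]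
  simp only [IsHermitian.cfc, Matrix.PosSemidef.sqrt, Unitary.conjStarAlgAut_apply]
  congr 3
  ext i
  simp [Real.coe_sqrt]
  rw [max_eq_left (hA.eigenvalues_nonneg i)]

open scoped MatrixOrder in
theorem Matrix.PosSemidef.sqrt_mul_self {n 𝕜 : Type*} [Fintype n] [RCLike 𝕜] [DecidableEq n]
    {A : Matrix n n 𝕜} (hA : A.PosSemidef) : hA.sqrt * hA.sqrt = A := by
  rw [hA.sqrt_eq_cfcSqrt]; exact CFC.sqrt_mul_sqrt_self A hA.nonneg

open scoped MatrixOrder in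
theorem Matrix.PosSemidef.posSemidef_sqrt {n 𝕜 : Type*} [Fintype n] [RCLike 𝕜] [DecidableEq n]
    {A : Matrix n n 𝕜} (hA : A.PosSemidef) : hA.sqrt.PosSemidef := by
  rw [hA.sqrt_eq_cfcSqrt]; exact (CFC.sqrt_nonneg A).posSemidef

open scoped MatrixOrder in
theorem Matrix.PosSemidef.eq_sqrt_of_sq_eq {n 𝕜 : Type*} [Fintype n] [RCLike 𝕜] [DecidableEq n]
    {A : Matrix n n 𝕜} (hA : A.PosSemidef) {B : Matrix n n 𝕜} (hB : B.PosSemidef)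
    (hAB : A ^ 2 = B) : A = hB.sqrt := by
  rw [hB.sqrt_eq_cfcSqrt, ← hAB, pow_two]
  exact (CFC.sqrt_mul_self A hA.nonneg).symm

/-- γ' = (1/2)·[[√(XX†), X], [X†, √(X†X)]] as a block matrix on ℂ^d ⊕ ℂ^d. -/
noncomputable def gammaPrime {d : ℕ} (X : Matrix (Fin d) (Fin d) ℂ) :
    Matrix (Fin d ⊕ Fin d) (Fin d ⊕ Fin d) ℂ :=
  (1 / 2 : ℂ) • fromBlocks (Matrix.posSemidef_self_mul_conjTranspose X).sqrt X
    Xᴴ (Matrix.posSemidef_conjTranspose_mul_self X).sqrt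

theorem stmt_0 {d : ℕ} (X : Matrix (Fin d) (Fin d) ℂ)
    (hinv : IsUnit (Matrix.posSemidef_self_mul_conjTranspose X).sqrt) :
    (∀ ψ : Fin d → ℂ,
      gammaPrime X *ᵥ
        Sum.elim ψ (-((Xᴴ * ((Matrix.posSemidef_self_mul_conjTranspose X).sqrt)⁻¹) *ᵥ ψ)) = 0) ∧
    (gammaPrime X).rank ≤ d := by
  set hA := Matrix.posSemidef_self_mul_conjTranspose X
  set hB := Matrix.posSemidef_conjTranspose_mul_self X
  set S := hA.sqrt with hSdef
  have hdet : IsUnit S.det := (Matrix.isUnit_iff_isUnit_det S).mp hinv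
  have hSS : S * S = X * Xᴴ := hA.sqrt_mul_self
  have hS1 : S⁻¹ * S = 1 := Matrix.nonsing_inv_mul S hdet
  have hS2 : S * S⁻¹ = 1 := Matrix.mul_nonsing_inv S hdet
  -- S⁻¹ is PSD
  have hSH : S⁻¹ᴴ = S⁻¹ := by
    rw [Matrix.conjTranspose_nonsing_inv, hA.posSemidef_sqrt.1.eq]
  have hSinvPSD : (S⁻¹).PosSemidef := by
    have h := hA.posSemidef_sqrt.mul_mul_conjTranspose_same S⁻¹
    have : S⁻¹ * S * S⁻¹ᴴ = S⁻¹ := by rw [hS1, Matrix.one_mul, hSH]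
    rwa [this] at h
  -- the candidate sqrt of XᴴX
  have hN : (Xᴴ * S⁻¹ * X).PosSemidef := by
    have h := hSinvPSD.mul_mul_conjTranspose_same Xᴴ
    rwa [Matrix.conjTranspose_conjTranspose] at h
  have hNsq : (Xᴴ * S⁻¹ * X) ^ 2 = Xᴴ * X := by
    rw [pow_two]
    calc Xᴴ * S⁻¹ * X * (Xᴴ * S⁻¹ * X)
        = Xᴴ * S⁻¹ * (X * Xᴴ) * (S⁻¹ * X) := by
          simp only [Matrix.mul_assoc]
      _ = Xᴴ * X := by
          rw [← hSS]
          calc Xᴴ * S⁻¹ * (S * S) * (S⁻¹ * X)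
              = Xᴴ * ((S⁻¹ * S) * (S * S⁻¹) * X) := by simp only [Matrix.mul_assoc]
            _ = Xᴴ * X := by rw [hS1, hS2, Matrix.one_mul, Matrix.one_mul]
  have hBsqrt : hB.sqrt = Xᴴ * S⁻¹ * X := (hN.eq_sqrt_of_sq_eq hB hNsq).symm
  -- key multiplication identities
  have hXT : X * (Xᴴ * S⁻¹) = S := by
    rw [← Matrix.mul_assoc, ← hSS, Matrix.mul_assoc, hS2, Matrix.mul_one]
  have hNT : hB.sqrt * (Xᴴ * S⁻¹) = Xᴴ := by
    rw [hBsqrt]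
    calc Xᴴ * S⁻¹ * X * (Xᴴ * S⁻¹)
        = Xᴴ * S⁻¹ * (X * Xᴴ) * S⁻¹ := by simp only [Matrix.mul_assoc]
      _ = Xᴴ * ((S⁻¹ * S) * (S * S⁻¹)) := by rw [← hSS]; simp only [Matrix.mul_assoc]
      _ = Xᴴ := by rw [hS1, hS2, Matrix.one_mul, Matrix.mul_one]
  constructor
  · intro ψ
    rw [gammaPrime, Matrix.smul_mulVec, Matrix.fromBlocks_mulVec]
    simp only [Sum.elim_comp_inl, Sum.elim_comp_inr]
    have h1 : S *ᵥ ψ + X *ᵥ -((Xᴴ * S⁻¹) *ᵥ ψ) = 0 := by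
      rw [Matrix.mulVec_neg, Matrix.mulVec_mulVec, hXT, add_neg_cancel]
    have h2 : Xᴴ *ᵥ ψ + hB.sqrt *ᵥ -((Xᴴ * S⁻¹) *ᵥ ψ) = 0 := by
      rw [Matrix.mulVec_neg, Matrix.mulVec_mulVec, hNT, add_neg_cancel]
    rw [h1, h2]
    simp
  · have hfact : gammaPrime X =
        ((1 / 2 : ℂ) • fromRows (1 : Matrix (Fin d) (Fin d) ℂ) (Xᴴ * S⁻¹)) *
          fromCols S X := by
      have hTS : Xᴴ * S⁻¹ * S = Xᴴ := by rw [Matrix.mul_assoc, hS1, Matrix.mul_one]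
      rw [Matrix.smul_mul, Matrix.fromRows_mul, Matrix.one_mul, Matrix.mul_fromCols, hTS, ← hBsqrt,
        Matrix.fromRows_fromCols_eq_fromBlocks, gammaPrime]
    calc (gammaPrime X).rank ≤ (fromCols S X).rank := by
          rw [hfact]; exact Matrix.rank_mul_le_right _ _
      _ ≤ Fintype.card (Fin d) := Matrix.rank_le_card_height _
      _ = d := Fintype.card_fin d
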